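/- For every total ordering v₀ < ⋯ < vₙ of variables and every basic formula α whose variables are among v₀,…,vₙ, either α is unsatisfiable in the structure 𝒯 of trees, or there exists a basic formula that is solved with respect to this ordering and is equivalent to α in the extended theory of trees; moreover, when the signature is finite, such a solved formula (or the answer 'unsatisfiable') is computable from α. -/

import Mathlib

set_option linter.unusedVariables false


/-- A many-sorted signature: sorts and generators (function symbols),
each generator `g` having argument sorts `src g` and target sort `tgt g`. -/
structure Sig where
  Srt : Type
  Gen : Type
  tgt : Gen → Srt
  src : Gen → List Srt

namespace Sig

variable (σ : Sig)

/-- The generators of a sort `s`. -/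
def Gens (s : σ.Srt) : Set σ.Gen := { g | σ.tgt g = s }

/-- A labeling of positions (lists of natural numbers) by generators is a valid
tree labeling if children exist exactly according to arity and have the right sorts. -/
def IsLabeling (L : List ℕ → Option σ.Gen) : Prop :=
  (∀ p, L p = none → ∀ i, L (p ++ [i]) = none) ∧
  (∀ p g, L p = some g → ∀ i, ((L (p ++ [i])).isSome ↔ i < (σ.src g).length)) ∧
  (∀ p g i g', L p = some g → L (p ++ [i]) = some g' →
      (σ.src g)[i]? = some (σ.tgt g'))

/-- A (possibly infinite) tree of sort `s`. -/
structure Tree (s : σ.Srt) where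
  L : List ℕ → Option σ.Gen
  isLab : σ.IsLabeling L
  root : ∃ g, L [] = some g ∧ σ.tgt g = s

variable {σ}

/-- A tree is finite if it has finitely many nodes. -/
def Tree.IsFinite {s : σ.Srt} (t : σ.Tree s) : Prop :=
  { p : List ℕ | (t.L p).isSome }.Finite

/-- The tree has depth at most `d`. -/
def Tree.DepthLE {s : σ.Srt} (t : σ.Tree s) (d : ℕ) : Prop :=
  ∀ p, (t.L p).isSome → p.length ≤ d

variable (σ)

/-- Build a tree with root labeled `g` from given immediate subtrees. -/
def build (g : σ.Gen) (c : ∀ i : Fin (σ.src g).length, σ.Tree ((σ.src g).get i)) :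
    σ.Tree (σ.tgt g) where
  L := fun p =>
    match p with
    | [] => some g
    | i :: q => if h : i < (σ.src g).length then (c ⟨i, h⟩).L q else none
  isLab := by
    refine ⟨?_, ?_, ?_⟩
    · intro p hp i
      match p with
      | [] => simp at hp
      | j :: q =>
        simp only [List.cons_append]
        by_cases h : j < (σ.src g).length
        · simp only [dif_pos h] at hp ⊢
          exact (c ⟨j, h⟩).isLab.1 q hp i
        · simp only [dif_neg h]
    · intro p g' hp i
      match p with
      | [] =>
        injection hp with hg
        subst hg
        by_cases h : i < (σ.src g).length
        · simp only [List.nil_append, dif_pos h]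
          obtain ⟨g₀, h₀, -⟩ := (c ⟨i, h⟩).root
          simp [h₀, h]
        · simp [List.nil_append, dif_neg h, h]
      | j :: q =>
        by_cases h : j < (σ.src g).length
        · simp only [dif_pos h] at hp
          simp only [List.cons_append, dif_pos h]
          exact (c ⟨j, h⟩).isLab.2.1 q g' hp i
        · simp only [dif_neg h] at hp
          exact nomatch hp
    · intro p g' i g'' hp hpi
      match p with
      | [] =>
        injection hp with hg
        subst hg
        by_cases h : i < (σ.src g).length
        · simp only [List.nil_append, dif_pos h] at hpi
          obtain ⟨g₀, h₀, htgt⟩ := (c ⟨i, h⟩).root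
          rw [h₀, Option.some.injEq] at hpi
          subst hpi
          rw [List.getElem?_eq_getElem h]
          exact congrArg some htgt.symm
        · simp only [List.nil_append, dif_neg h] at hpi
          exact nomatch hpi
      | j :: q =>
        by_cases h : j < (σ.src g).length
        · simp only [dif_pos h] at hp
          simp only [List.cons_append, dif_pos h] at hpi
          exact (c ⟨j, h⟩).isLab.2.2 q g' i g'' hp hpi
        · simp only [dif_neg h] at hp
          exact nomatch hp
  root := ⟨g, rfl, rfl⟩

/-- Sorts with no infinite trees. -/
def S0I : Set σ.Srt := { s | ∀ t : σ.Tree s, t.IsFinite }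
/-- Sorts with no finite trees. -/
def S0F : Set σ.Srt := { s | ∀ t : σ.Tree s, ¬ t.IsFinite }
/-- Sorts with only finitely many finite trees. -/
def SFF : Set σ.Srt := { s | { t : σ.Tree s | t.IsFinite }.Finite }
/-- Sorts with only finitely many infinite trees. -/
def SFI : Set σ.Srt := { s | { t : σ.Tree s | ¬ t.IsFinite }.Finite }
/-- Sorts with exactly one infinite tree. -/
def S1I : Set σ.Srt := { s | ∃! t : σ.Tree s, ¬ t.IsFinite }

/-- Terms of the (extended) first-order language of trees. Variables are
pairs of a sort and a number. -/
inductive Tm : σ.Srt → Type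
  | var (s : σ.Srt) (n : ℕ) : Tm s
  | app (g : σ.Gen) (args : ∀ i : Fin (σ.src g).length, Tm ((σ.src g).get i)) :
      Tm (σ.tgt g)

/-- Valuations assign trees to (sorted) variables. -/
def Val := ∀ s : σ.Srt, ℕ → σ.Tree s

variable {σ}

/-- Evaluation of a term in the structure of trees under a valuation. -/
def Tm.eval (ρ : σ.Val) : ∀ {s : σ.Srt}, σ.Tm s → σ.Tree s
  | _, .var s n => ρ s n
  | _, .app g args => σ.build g (fun i => (args i).eval ρ)

/-- The (sorted) free variables of a term. -/
def Tm.fv : ∀ {s : σ.Srt}, σ.Tm s → Set ((s : σ.Srt) × ℕ)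
  | _, .var s n => {⟨s, n⟩}
  | _, .app _ args => ⋃ i, (args i).fv

/-- A term is flat if it is a variable or a generator applied to variables. -/
def Tm.IsFlat : ∀ {s : σ.Srt}, σ.Tm s → Prop
  | _, .var _ _ => True
  | _, .app g args => ∀ i : Fin (σ.src g).length, ∃ n, args i = Tm.var ((σ.src g).get i) n

/-- A term of the form `f(z̄)`. -/
def Tm.IsApp : ∀ {s : σ.Srt}, σ.Tm s → Prop
  | _, .var _ _ => False
  | _, .app _ _ => True

open Classical in
/-- Update a valuation at one sorted variable. -/
noncomputable def updV (ρ : σ.Val) (s : σ.Srt) (n : ℕ) (t : σ.Tree s) : σ.Val :=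
  fun s' m =>
    if h : s' = s then
      (if m = n then cast (congrArg σ.Tree h.symm) t else ρ s' m)
    else ρ s' m

variable (σ)

/-- Formulae of the extended first-order language of trees: equality,
the finiteness predicates `fin`, propositional connectives and sorted quantifiers. -/
inductive Fml : Type
  | tru : Fml
  | fls : Fml
  | eq {s : σ.Srt} (a b : σ.Tm s) : Fml
  | fin {s : σ.Srt} (a : σ.Tm s) : Fml
  | not (φ : Fml) : Fml
  | and (φ ψ : Fml) : Fml
  | or (φ ψ : Fml) : Fml
  | imp (φ ψ : Fml) : Fml
  | ex (s : σ.Srt) (n : ℕ) (φ : Fml) : Fml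
  | all (s : σ.Srt) (n : ℕ) (φ : Fml) : Fml

variable {σ}

/-- Satisfaction of a formula in the structure `𝒯` of trees under a valuation. -/
def Fml.Sat (ρ : σ.Val) : σ.Fml → Prop
  | .tru => True
  | .fls => False
  | .eq a b => a.eval ρ = b.eval ρ
  | .fin a => (a.eval ρ).IsFinite
  | .not φ => ¬ φ.Sat ρ
  | .and φ ψ => φ.Sat ρ ∧ ψ.Sat ρ
  | .or φ ψ => φ.Sat ρ ∨ ψ.Sat ρ
  | .imp φ ψ => φ.Sat ρ → ψ.Sat ρ
  | .ex s n φ => ∃ t : σ.Tree s, φ.Sat (updV ρ s n t)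
  | .all s n φ => ∀ t : σ.Tree s, φ.Sat (updV ρ s n t)

/-- The free variables of a formula. -/
def Fml.fv : σ.Fml → Set ((s : σ.Srt) × ℕ)
  | .tru => ∅
  | .fls => ∅
  | .eq a b => a.fv ∪ b.fv
  | .fin a => a.fv
  | .not φ => φ.fv
  | .and φ ψ => φ.fv ∪ ψ.fv
  | .or φ ψ => φ.fv ∪ ψ.fv
  | .imp φ ψ => φ.fv ∪ ψ.fv
  | .ex s n φ => φ.fv \ {⟨s, n⟩}
  | .all s n φ => φ.fv \ {⟨s, n⟩}

/-- Two formulae are equivalent in the extended theory of trees if they are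
satisfied by exactly the same valuations. -/
def FmlEquiv (φ ψ : σ.Fml) : Prop := ∀ ρ : σ.Val, φ.Sat ρ ↔ ψ.Sat ρ


variable (σ)

/-- A basic formula: a conjunction of equations `v = t` (with `t` a flat term)
and finiteness constraints `fin(u)`, represented by the list of equations
(a sort, the left-hand-side variable, the right-hand-side term) and the list of
`fin`-variables. -/
structure Basic where
  eqs : List ((s : σ.Srt) × ℕ × σ.Tm s)
  fins : List ((s : σ.Srt) × ℕ)

variable {σ}

/-- Well-formedness of a basic formula: all right-hand sides are flat. -/
def Basic.WF (β : σ.Basic) : Prop := ∀ e ∈ β.eqs, (e.2.2).IsFlat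

/-- Satisfaction of a basic formula under a valuation. -/
def Basic.Sat (β : σ.Basic) (ρ : σ.Val) : Prop :=
  (∀ e ∈ β.eqs, ρ e.1 e.2.1 = (e.2.2).eval ρ) ∧
  (∀ u ∈ β.fins, (ρ u.1 u.2).IsFinite)

/-- The variables occurring in a basic formula. -/
def Basic.vars (β : σ.Basic) : Set ((s : σ.Srt) × ℕ) :=
  { x | (∃ e ∈ β.eqs, (⟨e.1, e.2.1⟩ : (s : σ.Srt) × ℕ) = x ∨ x ∈ (e.2.2).fv) ∨ x ∈ β.fins }

/-- One step of reachability: `y` occurs in the right-hand side of an equation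
whose left-hand side is `x`. -/
def Basic.step (β : σ.Basic) (x y : (s : σ.Srt) × ℕ) : Prop :=
  ∃ e ∈ β.eqs, (⟨e.1, e.2.1⟩ : (s : σ.Srt) × ℕ) = x ∧ y ∈ (e.2.2).fv

/-- `y` is reachable from `x` (by a chain of equations, possibly empty). -/
def Basic.Reach (β : σ.Basic) (x y : (s : σ.Srt) × ℕ) : Prop :=
  Relation.ReflTransGen β.step x y

/-- `y` is properly reachable from `x` (by a nonempty chain of equations). -/
def Basic.ProperReach (β : σ.Basic) (x y : (s : σ.Srt) × ℕ) : Prop :=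
  Relation.TransGen β.step x y

open Classical in
/-- The index of an element in a list (used to compare variables in a given ordering). -/
noncomputable def idx {A : Type*} (vs : List A) (x : A) : ℕ :=
  vs.findIdx fun y => decide (y = x)

/-- `x` is smaller than `y` in the variable ordering given by the list `vs`. -/
noncomputable def ltv {A : Type*} (vs : List A) (x y : A) : Prop :=
  idx vs x < idx vs y

/-- A basic formula is solved with respect to the variable ordering `vs`:
(1) the left-hand-side variables of equations and the `fin`-variables are
pairwise distinct and every equation `x = y` between variables has `x > y`;
(2) `fin(v)` occurs only if the sort of `v` has both finite and infinite trees. -/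
noncomputable def Solved (vs : List ((s : σ.Srt) × ℕ)) (β : σ.Basic) : Prop :=
  ((β.eqs.map fun e => (⟨e.1, e.2.1⟩ : (s : σ.Srt) × ℕ)) ++ β.fins).Nodup ∧
  (∀ e ∈ β.eqs, ∀ n : ℕ, e.2.2 = Sig.Tm.var e.1 n →
      ltv vs (⟨e.1, n⟩ : (s : σ.Srt) × ℕ) ⟨e.1, e.2.1⟩) ∧
  (∀ u ∈ β.fins, (∃ t : σ.Tree u.1, t.IsFinite) ∧ (∃ t : σ.Tree u.1, ¬ t.IsFinite))

/-- `ρ'` agrees with `ρ` outside the set `V` of variables. -/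
def AgreesOff (ρ ρ' : σ.Val) (V : Set ((s : σ.Srt) × ℕ)) : Prop :=
  ∀ (s : σ.Srt) (n : ℕ), (⟨s, n⟩ : (s : σ.Srt) × ℕ) ∉ V → ρ' s n = ρ s n

variable (σ)

/-- A normal formula of depth at most 2,
`¬(∃x̄. α ∧ ⋀ᵢ ¬(∃ȳᵢ. βᵢ))`, given by the bound variables `x̄`,
the basic formula `α` and the list of pairs `(ȳᵢ, βᵢ)`. -/
structure NF2 where
  xs : List ((s : σ.Srt) × ℕ)
  base : σ.Basic
  inner : List (List ((s : σ.Srt) × ℕ) × σ.Basic)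

variable {σ}

/-- Well-formedness of the basic subformulae of a normal formula of depth ≤ 2. -/
def NF2.WF (φ : σ.NF2) : Prop := φ.base.WF ∧ ∀ p ∈ φ.inner, (p.2).WF

/-- Satisfaction of the inner part `∃x̄. α ∧ ⋀ᵢ ¬(∃ȳᵢ. βᵢ)` of a normal formula
of depth ≤ 2 (this is the shape of a fully simplified formula). -/
def NF2.PosSat (φ : σ.NF2) (ρ : σ.Val) : Prop :=
  ∃ ρ₁ : σ.Val, AgreesOff ρ ρ₁ { x | x ∈ φ.xs } ∧ φ.base.Sat ρ₁ ∧
    ∀ p ∈ φ.inner, ¬ ∃ ρ₂ : σ.Val, AgreesOff ρ₁ ρ₂ { x | x ∈ p.1 } ∧ (p.2).Sat ρ₂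

/-- Satisfaction of a normal formula `¬(∃x̄. α ∧ ⋀ᵢ ¬(∃ȳᵢ. βᵢ))` of depth ≤ 2. -/
def NF2.Sat (φ : σ.NF2) (ρ : σ.Val) : Prop := ¬ φ.PosSat ρ

/-- The free variables of a normal formula of depth ≤ 2. -/
def NF2.fv (φ : σ.NF2) : Set ((s : σ.Srt) × ℕ) :=
  (φ.base.vars \ { x | x ∈ φ.xs }) ∪
    { x | ∃ p ∈ φ.inner, x ∈ (p.2).vars ∧ x ∉ φ.xs ∧ x ∉ p.1 }

/-- All variables occurring (bound or free) in a normal formula of depth ≤ 2. -/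
def NF2.allVars (φ : σ.NF2) : Set ((s : σ.Srt) × ℕ) :=
  φ.base.vars ∪ { x | x ∈ φ.xs } ∪ { x | ∃ p ∈ φ.inner, x ∈ p.1 ∨ x ∈ (p.2).vars }

open Classical in
/-- `β` with all conjuncts also occurring in `α` removed (written `β*`). -/
noncomputable def bstar (α β : σ.Basic) : σ.Basic where
  eqs := β.eqs.filter fun e => decide (e ∉ α.eqs)
  fins := β.fins.filter fun u => decide (u ∉ α.fins)

/-- `β` contains an equation `u = f(w̄)`. -/
def HasEqApp (β : σ.Basic) (u : (s : σ.Srt) × ℕ) : Prop :=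
  ∃ e ∈ β.eqs, (⟨e.1, e.2.1⟩ : (s : σ.Srt) × ℕ) = u ∧ (e.2.2).IsApp

/-- `α` contains an equation with left-hand side `u`. -/
def HasLhs (α : σ.Basic) (u : (s : σ.Srt) × ℕ) : Prop :=
  ∃ e ∈ α.eqs, (⟨e.1, e.2.1⟩ : (s : σ.Srt) × ℕ) = u

/-- Definition of an instantiable variable of a normal formula
`¬(∃x̄. α ∧ ⋀ᵢ ¬(∃ȳᵢ. βᵢ))` of depth at most 2 (Definition of the paper):
`u` is free or among `x̄` and one of the four conditions holds. -/
def NF2.Instantiable (φ : σ.NF2) (u : (s : σ.Srt) × ℕ) : Prop :=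
  (u ∈ φ.fv ∨ u ∈ φ.xs) ∧
  ( ((σ.Gens u.1).Finite ∧ ∃ p ∈ φ.inner,
        HasEqApp (bstar φ.base p.2) u ∧ ¬ (p.2).ProperReach u u)
  ∨ (u.1 ∈ σ.SFF ∩ σ.SFI ∧ (∃ p ∈ φ.inner, u ∈ (bstar φ.base p.2).vars) ∧
        ¬ HasLhs φ.base u)
  ∨ (u.1 ∈ σ.SFF ∧ u ∈ φ.base.fins ∧ ∃ p ∈ φ.inner, u ∈ (bstar φ.base p.2).vars)
  ∨ (u.1 ∈ σ.SFI ∧ ∃ p ∈ φ.inner,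
        (bstar φ.base p.2).eqs = [] ∧ u ∈ (bstar φ.base p.2).fins) )

/-- A normal formula of depth at most 2 is solved (conditions (1)–(5) of the paper):
its basic subformulae are solved with respect to an ordering compatible with binding
depth, the equations of `α` are included in each `βᵢ`, each `βᵢ` has a conjunct not
in `α`, no variable is instantiable, and all bound variables are reachable from
the free variables of the respective subformula. -/
noncomputable def NF2.IsSolved (φ : σ.NF2) : Prop :=
  (∃ vs : List ((s : σ.Srt) × ℕ), vs.Nodup ∧
    (∀ x ∈ φ.allVars, x ∈ vs) ∧
    (∀ a ∈ φ.fv, ∀ b ∈ φ.xs, ltv vs a b) ∧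
    (∀ p ∈ φ.inner, ∀ b ∈ φ.xs, ∀ c ∈ p.1, ltv vs b c) ∧
    (∀ p ∈ φ.inner, ∀ a ∈ φ.fv, ∀ c ∈ p.1, ltv vs a c) ∧
    Solved vs φ.base ∧ ∀ p ∈ φ.inner, Solved vs p.2) ∧
  (∀ p ∈ φ.inner, ∀ e ∈ φ.base.eqs, e ∈ (p.2).eqs) ∧
  (∀ p ∈ φ.inner, (∃ e ∈ (p.2).eqs, e ∉ φ.base.eqs) ∨ (∃ u ∈ (p.2).fins, u ∉ φ.base.fins)) ∧
  (∀ u : (s : σ.Srt) × ℕ, ¬ φ.Instantiable u) ∧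
  (∀ x ∈ φ.xs, ∃ v, v ∈ φ.base.vars ∧ v ∉ φ.xs ∧ φ.base.Reach v x) ∧
  (∀ p ∈ φ.inner, ∀ y ∈ p.1, ∃ v, v ∈ (p.2).vars ∧ v ∉ p.1 ∧ (p.2).Reach v y)

end Sig

namespace Sig

open Classical

variable {σ : Sig}

theorem Tree.ext' {s : σ.Srt} {t t' : σ.Tree s} (h : t.L = t'.L) : t = t' := by
  cases t; cases t'; cases h; rfl

theorem build_L_nil (g : σ.Gen) (c) : (σ.build g c).L [] = some g := rfl

theorem build_L_cons (g : σ.Gen) (c) (i : ℕ) (h : i < (σ.src g).length) (q : List ℕ) :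
    (σ.build g c).L (i :: q) = (c ⟨i, h⟩).L q := by
  show (if h : i < (σ.src g).length then (c ⟨i, h⟩).L q else none) = _
  rw [dif_pos h]

theorem build_L_cons_neg (g : σ.Gen) (c) (i : ℕ) (h : ¬ i < (σ.src g).length) (q : List ℕ) :
    (σ.build g c).L (i :: q) = none := by
  show (if h : i < (σ.src g).length then (c ⟨i, h⟩).L q else none) = _
  rw [dif_neg h]

theorem build_args_inj {g : σ.Gen} {c c'} (h : σ.build g c = σ.build g c')
    (i : Fin (σ.src g).length) : c i = c' i := by
  apply Tree.ext'; funext q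
  have h1 := congrFun (congrArg Tree.L h) ((i : ℕ) :: q)
  rwa [build_L_cons g c (i:ℕ) i.isLt, build_L_cons g c' (i:ℕ) i.isLt] at h1

theorem cast_tree_L {s s' : σ.Srt} (h : s = s') (t : σ.Tree s) :
    (cast (congrArg σ.Tree h) t).L = t.L := by subst h; rfl

theorem eval_cast {s s' : σ.Srt} (h : s' = s) (t : σ.Tm s') (ρ : σ.Val) :
    Sig.Tm.eval ρ (h ▸ t) = cast (congrArg σ.Tree h) (t.eval ρ) := by subst h; rfl

theorem tm_rep {s : σ.Srt} (t : σ.Tm s) :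
    (∃ m, t = Sig.Tm.var s m) ∨
      ∃ (g : σ.Gen) (args : ∀ i : Fin (σ.src g).length, σ.Tm ((σ.src g).get i)) (h : σ.tgt g = s), t = h ▸ Sig.Tm.app g args := by
  cases t with
  | var s m => exact Or.inl ⟨m, rfl⟩
  | app g args => exact Or.inr ⟨g, args, rfl, rfl⟩

theorem mem_nodes_build (g : σ.Gen) (c) (p : List ℕ) :
    ((σ.build g c).L p).isSome ↔
      p = [] ∨ ∃ i : Fin (σ.src g).length, ∃ q, ((c i).L q).isSome ∧ p = (i : ℕ) :: q := by
  cases p with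
  | nil => simp [build_L_nil]
  | cons j q =>
    constructor
    · intro hs
      by_cases h : j < (σ.src g).length
      · exact Or.inr ⟨⟨j, h⟩, q, by rwa [build_L_cons g c j h] at hs, rfl⟩
      · rw [build_L_cons_neg g c j h] at hs; simp at hs
    · rintro (h | ⟨i, q', hq', heq⟩)
      · exact absurd h (by simp)
      · cases heq
        rw [build_L_cons g c (i:ℕ) i.isLt, Fin.eta]; exact hq'

theorem build_isFinite_iff (g : σ.Gen) (c) :
    (σ.build g c).IsFinite ↔ ∀ i, (c i).IsFinite := by
  constructor
  · intro h i
    have hset : {q | ((c i).L q).isSome}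
        = (fun q => ((i : ℕ) :: q : List ℕ)) ⁻¹' {p | ((σ.build g c).L p).isSome} := by
      ext q
      simp only [Set.mem_preimage, Set.mem_setOf_eq, build_L_cons g c (i:ℕ) i.isLt, Fin.eta]
    rw [Tree.IsFinite, hset]
    exact h.preimage (fun a _ b _ hab => by simpa using hab)
  · intro h
    have hsub : {p | ((σ.build g c).L p).isSome} ⊆
        insert [] (⋃ i : Fin (σ.src g).length, (fun q => (i : ℕ) :: q) '' {q | ((c i).L q).isSome}) := by
      intro p hp
      rcases (mem_nodes_build g c p).1 hp with rfl | ⟨i, q, hq, rfl⟩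
      · exact Set.mem_insert _ _
      · exact Set.mem_insert_of_mem _ (Set.mem_iUnion.2 ⟨i, Set.mem_image_of_mem _ hq⟩)
    exact Set.Finite.subset
      (Set.Finite.insert _ (Set.finite_iUnion fun i => (h i).image _)) hsub

/-- Number of nodes of a tree (junk value for infinite trees). -/
noncomputable def tsize {s : σ.Srt} (t : σ.Tree s) : ℕ := {p | (t.L p).isSome}.ncard

theorem tsize_pos {s : σ.Srt} (t : σ.Tree s) (hf : t.IsFinite) : 1 ≤ tsize t := by
  obtain ⟨g, hg, -⟩ := t.root
  have : ([] : List ℕ) ∈ {p | (t.L p).isSome} := by simp [hg]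
  exact (Set.ncard_pos hf).2 ⟨_, this⟩

theorem tsize_lt (g : σ.Gen) (c) (hf : (σ.build g c).IsFinite)
    (i : Fin (σ.src g).length) : tsize (c i) < tsize (σ.build g c) := by
  have hinj : Function.Injective (fun q => ((i : ℕ) :: q : List ℕ)) :=
    fun a b hab => by simpa using hab
  have himg : (fun q => ((i : ℕ) :: q : List ℕ)) '' {q | ((c i).L q).isSome}
      ⊆ {p | ((σ.build g c).L p).isSome} := by
    rintro p ⟨q, hq, rfl⟩
    simp only [Set.mem_setOf_eq]
    rw [build_L_cons g c (i:ℕ) i.isLt, Fin.eta]; exact hq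
  have hne : ([] : List ℕ) ∈ {p | ((σ.build g c).L p).isSome} := by simp [build_L_nil]
  have hnomem : ([] : List ℕ) ∉ (fun q => ((i : ℕ) :: q : List ℕ)) '' {q | ((c i).L q).isSome} := by
    rintro ⟨q, -, h⟩; simp at h
  have hss : (fun q => ((i : ℕ) :: q : List ℕ)) '' {q | ((c i).L q).isSome}
      ⊂ {p | ((σ.build g c).L p).isSome} :=
    ⟨himg, fun hsup => hnomem (hsup hne)⟩
  calc tsize (c i) = ((fun q => ((i : ℕ) :: q : List ℕ)) '' {q | ((c i).L q).isSome}).ncard :=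
        (Set.ncard_image_of_injective _ hinj).symm
    _ < _ := Set.ncard_lt_ncard hss hf

end Sig

namespace Sig

open Classical

variable {σ : Sig}

/-- The type of equations of basic formulae. -/
abbrev EqT (σ : Sig) := (s : σ.Srt) × ℕ × σ.Tm s

/-- Left-hand-side variable of an equation. -/
abbrev elhs (e : EqT σ) : (s : σ.Srt) × ℕ := ⟨e.1, e.2.1⟩

/-- An equation holds under a valuation. -/
def EqHolds (ρ : σ.Val) (e : EqT σ) : Prop := ρ e.1 e.2.1 = (e.2.2).eval ρ

theorem sat_def (β : σ.Basic) (ρ : σ.Val) :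
    β.Sat ρ ↔ (∀ e ∈ β.eqs, EqHolds ρ e) ∧ (∀ u ∈ β.fins, (ρ u.1 u.2).IsFinite) :=
  Iff.rfl

/-- `some m` if the term is the variable `m`, else `none`. -/
def varIdxOf : {s : σ.Srt} → σ.Tm s → Option ℕ
  | _, .var _ m => some m
  | _, .app _ _ => none

/-- Arity of the head of a term (0 for variables). -/
def tmAr : {s : σ.Srt} → σ.Tm s → ℕ
  | _, .var _ _ => 0
  | _, .app g _ => (σ.src g).length

@[simp] theorem varIdxOf_var (s : σ.Srt) (m : ℕ) : varIdxOf (Sig.Tm.var s m) = some m := rfl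
@[simp] theorem varIdxOf_app (g : σ.Gen) (args) : varIdxOf (Sig.Tm.app g args) = none := rfl
@[simp] theorem tmAr_var (s : σ.Srt) (m : ℕ) : tmAr (Sig.Tm.var s m) = 0 := rfl
@[simp] theorem tmAr_app (g : σ.Gen) (args) : tmAr (Sig.Tm.app g args) = (σ.src g).length := rfl

theorem varIdxOf_cast {s s' : σ.Srt} (h : s' = s) (t : σ.Tm s') :
    varIdxOf (h ▸ t) = varIdxOf t := by subst h; rfl

theorem tmAr_cast {s s' : σ.Srt} (h : s' = s) (t : σ.Tm s') :
    tmAr (h ▸ t) = tmAr t := by subst h; rfl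

theorem fv_cast {s s' : σ.Srt} (h : s' = s) (t : σ.Tm s') :
    (h ▸ t).fv = t.fv := by subst h; rfl

theorem isFlat_cast {s s' : σ.Srt} (h : s' = s) (t : σ.Tm s') :
    (h ▸ t).IsFlat ↔ t.IsFlat := by subst h; rfl

theorem varIdxOf_eq_some {s : σ.Srt} {t : σ.Tm s} {m : ℕ} (h : varIdxOf t = some m) :
    t = Sig.Tm.var s m := by
  cases t with
  | var s n => injection h with h; rw [h]
  | app g args => simp at h

@[simp] theorem eval_var (ρ : σ.Val) (s : σ.Srt) (m : ℕ) :
    (Sig.Tm.var s m).eval ρ = ρ s m := rfl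

theorem eval_app (ρ : σ.Val) (g : σ.Gen) (args) :
    (Sig.Tm.app g args).eval ρ = σ.build g (fun i => (args i).eval ρ) := rfl

@[simp] theorem fv_var (s : σ.Srt) (m : ℕ) :
    (Sig.Tm.var s m).fv = {(⟨s, m⟩ : (s : σ.Srt) × ℕ)} := rfl

theorem fv_app (g : σ.Gen) (args) :
    (Sig.Tm.app g args).fv = ⋃ i, (args i).fv := rfl

/-- For a flat application, the chosen variable indices of the arguments. -/
noncomputable def argVar {g : σ.Gen}
    (args : ∀ i : Fin (σ.src g).length, σ.Tm ((σ.src g).get i))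
    (hf : (Sig.Tm.app g args).IsFlat) (i : Fin (σ.src g).length) : ℕ :=
  Classical.choose (hf i)

theorem argVar_spec {g : σ.Gen} (args) (hf : (Sig.Tm.app g args).IsFlat)
    (i : Fin (σ.src g).length) :
    args i = Sig.Tm.var ((σ.src g).get i) (argVar args hf i) :=
  Classical.choose_spec (hf i)

theorem mem_fv_app_flat {g : σ.Gen} (args) (hf : (Sig.Tm.app g args).IsFlat)
    (x : (s : σ.Srt) × ℕ) :
    x ∈ (Sig.Tm.app g args).fv ↔
      ∃ i : Fin (σ.src g).length, x = ⟨(σ.src g).get i, argVar args hf i⟩ := by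
  rw [fv_app]
  constructor
  · intro hx
    obtain ⟨i, hi⟩ := Set.mem_iUnion.1 hx
    refine ⟨i, ?_⟩
    rw [argVar_spec args hf i] at hi
    simpa using hi
  · rintro ⟨i, rfl⟩
    exact Set.mem_iUnion.2 ⟨i, by rw [argVar_spec args hf i]; simp⟩

/-- Injectivity of build on the generator. -/
theorem build_gen_inj {g g' : σ.Gen} {c c'} (h : σ.tgt g' = σ.tgt g)
    (he : σ.build g c = cast (congrArg σ.Tree h) (σ.build g' c')) : g = g' := by
  have h1 := congrFun (congrArg Tree.L he) []
  rw [cast_tree_L h (σ.build g' c'), build_L_nil, build_L_nil] at h1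
  injection h1

theorem cast_eval_eq_iff {s s' : σ.Srt} (h : s' = s) (a : σ.Tree s) (b : σ.Tree s') :
    a = cast (congrArg σ.Tree h) b ↔ HEq a b := by subst h; simp

/-- Variable and tree lemmas for idx/ltv. -/
theorem idx_lt_length {A : Type*} {vs : List A} {x : A} (h : x ∈ vs) :
    Sig.idx vs x < vs.length := by
  apply List.findIdx_lt_length_of_exists
  exact ⟨x, h, by simp⟩

theorem idx_le_length {A : Type*} (vs : List A) (x : A) : Sig.idx vs x ≤ vs.length :=
  List.findIdx_le_length

theorem idx_get {A : Type*} {vs : List A} {x : A} (h : x ∈ vs) :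
    vs.get ⟨Sig.idx vs x, idx_lt_length h⟩ = x := by
  have := List.findIdx_getElem (p := fun y => decide (y = x)) (w := idx_lt_length h)
  exact of_decide_eq_true (List.findIdx_getElem (w := idx_lt_length h))

theorem idx_inj {A : Type*} {vs : List A} {x y : A} (hx : x ∈ vs) (hy : y ∈ vs)
    (h : Sig.idx vs x = Sig.idx vs y) : x = y := by
  have h1 := idx_get hx
  have h2 := idx_get hy
  rw [← h1, ← h2]
  congr 1
  exact Fin.ext h

theorem ltv_total {A : Type*} {vs : List A} {x y : A} (hx : x ∈ vs) (hy : y ∈ vs)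
    (hne : x ≠ y) : Sig.ltv vs x y ∨ Sig.ltv vs y x := by
  rcases lt_trichotomy (Sig.idx vs x) (Sig.idx vs y) with h | h | h
  · exact Or.inl h
  · exact absurd (idx_inj hx hy h) hne
  · exact Or.inr h

end Sig

namespace Sig

open Classical

variable {σ : Sig}

/-- Weight of an equation, for the termination measure of phase 1. -/
noncomputable def ew (vs : List ((s : σ.Srt) × ℕ)) (B : ℕ) (e : EqT σ) : ℕ :=
  match varIdxOf e.2.2 with
  | some m => B ^ Sig.idx vs (⟨e.1, m⟩ : (s : σ.Srt) × ℕ)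
  | none => B ^ (2 * vs.length + 2 + Sig.idx vs (elhs e))

theorem ew_var (vs : List ((s : σ.Srt) × ℕ)) (B : ℕ) (s : σ.Srt) (x m : ℕ) :
    ew vs B ⟨s, x, Sig.Tm.var s m⟩ = B ^ Sig.idx vs (⟨s, m⟩ : (s : σ.Srt) × ℕ) := rfl

theorem ew_app (vs : List ((s : σ.Srt) × ℕ)) (B : ℕ) {s : σ.Srt} (x : ℕ) {t : σ.Tm s}
    (ht : varIdxOf t = none) :
    ew vs B ⟨s, x, t⟩ = B ^ (2 * vs.length + 2 + Sig.idx vs (⟨s, x⟩ : (s : σ.Srt) × ℕ)) := by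
  unfold ew; rw [ht]

theorem ew_pos (vs : List ((s : σ.Srt) × ℕ)) {B : ℕ} (hB : 2 ≤ B) (e : EqT σ) :
    1 ≤ ew vs B e := by
  unfold ew
  cases varIdxOf e.2.2 <;> exact Nat.one_le_pow _ _ (by omega)

/-- Phase-1 measure. -/
noncomputable def mu1 (vs : List ((s : σ.Srt) × ℕ)) (B : ℕ) (l : List (EqT σ)) : ℕ :=
  (l.map (ew vs B)).sum

/-- Weight of a fin-constraint relative to a fixed solution `ρ₀`. -/
noncomputable def fw (vs : List ((s : σ.Srt) × ℕ)) (B : ℕ) (ρ₀ : σ.Val)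
    (u : (s : σ.Srt) × ℕ) : ℕ :=
  B ^ ((vs.length + 1) * tsize (ρ₀ u.1 u.2) + Sig.idx vs u)

theorem fw_pos (vs : List ((s : σ.Srt) × ℕ)) {B : ℕ} (hB : 2 ≤ B) (ρ₀ : σ.Val)
    (u : (s : σ.Srt) × ℕ) : 1 ≤ fw vs B ρ₀ u :=
  Nat.one_le_pow _ _ (by omega)

/-- Phase-2 measure. -/
noncomputable def mu2 (vs : List ((s : σ.Srt) × ℕ)) (B : ℕ) (ρ₀ : σ.Val)
    (l : List ((s : σ.Srt) × ℕ)) : ℕ :=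
  (l.map (fw vs B ρ₀)).sum

theorem mu1_perm (vs : List ((s : σ.Srt) × ℕ)) (B : ℕ) {l l' : List (EqT σ)}
    (h : l.Perm l') : mu1 vs B l = mu1 vs B l' := (h.map _).sum_eq

theorem mu2_perm (vs : List ((s : σ.Srt) × ℕ)) (B : ℕ) (ρ₀ : σ.Val)
    {l l' : List ((s : σ.Srt) × ℕ)} (h : l.Perm l') :
    mu2 vs B ρ₀ l = mu2 vs B ρ₀ l' := (h.map _).sum_eq

theorem mu1_append (vs : List ((s : σ.Srt) × ℕ)) (B : ℕ) (l l' : List (EqT σ)) :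
    mu1 vs B (l ++ l') = mu1 vs B l + mu1 vs B l' := by
  simp [mu1]

theorem mu2_append (vs : List ((s : σ.Srt) × ℕ)) (B : ℕ) (ρ₀ : σ.Val) (l l') :
    mu2 vs B ρ₀ (l ++ l') = mu2 vs B ρ₀ l + mu2 vs B ρ₀ l' := by
  simp [mu2]

/-- Decompose a list at a member. -/
theorem perm_single {A : Type*} {l : List A} {a : A} (h : a ∈ l) :
    ∃ l', l.Perm (a :: l') := ⟨l.erase a, List.perm_cons_erase h⟩

theorem perm_pair {A : Type*} {l : List A} {a b : A} (ha : a ∈ l) (hb : b ∈ l)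
    (hne : a ≠ b) : ∃ l', l.Perm (a :: b :: l') := by
  obtain ⟨l1, h1⟩ := perm_single ha
  have hb1 : b ∈ l1 := by
    rcases List.mem_cons.1 (h1.mem_iff.1 hb) with h | h
    · exact (hne h.symm).elim
    · exact h
  obtain ⟨l2, h2⟩ := perm_single hb1
  exact ⟨l2, h1.trans (h2.cons a)⟩

theorem perm_dup {A : Type*} {l : List A} {a : A} (h : List.Duplicate a l) :
    ∃ l', l.Perm (a :: a :: l') := by
  have hm : a ∈ l := h.mem
  have hc : 2 ≤ l.count a := List.duplicate_iff_two_le_count.1 h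
  obtain ⟨l1, h1⟩ := perm_single hm
  have : a ∈ l1 := by
    have := h1.count_eq a
    rw [List.count_cons_self] at this
    have : 1 ≤ l1.count a := by omega
    exact List.count_pos_iff.1 this
  obtain ⟨l2, h2⟩ := perm_single this
  exact ⟨l2, h1.trans (h2.cons a)⟩

/-- Satisfaction of the equation part only depends on membership. -/
theorem sat_perm {β γ : σ.Basic} (he : β.eqs.Perm γ.eqs) (hf : β.fins.Perm γ.fins)
    (ρ : σ.Val) : β.Sat ρ ↔ γ.Sat ρ := by
  rw [sat_def, sat_def]
  constructor <;> rintro ⟨h1, h2⟩ <;>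
    exact ⟨fun e hee => h1 e (by first | exact he.mem_iff.2 hee | exact he.mem_iff.1 hee),
           fun u huu => h2 u (by first | exact hf.mem_iff.2 huu | exact hf.mem_iff.1 huu)⟩

/-- Variables of a basic formula: membership lemmas. -/
theorem mem_vars_lhs {β : σ.Basic} {e : EqT σ} (he : e ∈ β.eqs) : elhs e ∈ β.vars :=
  Or.inl ⟨e, he, Or.inl rfl⟩

theorem mem_vars_fv {β : σ.Basic} {e : EqT σ} (he : e ∈ β.eqs) {x : (s : σ.Srt) × ℕ}
    (hx : x ∈ (e.2.2).fv) : x ∈ β.vars :=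
  Or.inl ⟨e, he, Or.inr hx⟩

theorem mem_vars_fin {β : σ.Basic} {u : (s : σ.Srt) × ℕ} (hu : u ∈ β.fins) : u ∈ β.vars :=
  Or.inr hu

theorem vars_sub {eqs : List (EqT σ)} {fins : List ((s : σ.Srt) × ℕ)}
    {V : Set ((s : σ.Srt) × ℕ)}
    (hE : ∀ e ∈ eqs, elhs e ∈ V ∧ ∀ x ∈ (e.2.2).fv, x ∈ V)
    (hF : ∀ u ∈ fins, u ∈ V) :
    ∀ x ∈ (Sig.Basic.mk eqs fins).vars, x ∈ V := by
  rintro x (⟨e, he, hx | hx⟩ | hu)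
  · exact hx ▸ (hE e he).1
  · exact (hE e he).2 x hx
  · exact hF x hu

/-- Equations in solved form w.r.t. an ordering. -/
def EqsSolved (vs : List ((s : σ.Srt) × ℕ)) (l : List (EqT σ)) : Prop :=
  (l.map elhs).Nodup ∧
    ∀ e ∈ l, ∀ m : ℕ, e.2.2 = Sig.Tm.var e.1 m →
      Sig.ltv vs (⟨e.1, m⟩ : (s : σ.Srt) × ℕ) (elhs e)

end Sig

namespace Sig

open Classical

variable {σ : Sig}

theorem sig_ne {s : σ.Srt} {m m' : ℕ} (h : m ≠ m') :
    (⟨s, m⟩ : (s : σ.Srt) × ℕ) ≠ ⟨s, m'⟩ :=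
  fun hh => h (eq_of_heq (Sigma.mk.inj_iff.1 hh).2)

theorem pow_lt_pow_B {B a b : ℕ} (hB : 2 ≤ B) (h : a < b) : B ^ a < B ^ b :=
  Nat.pow_lt_pow_right (by omega) h

theorem pow_le_pow_B {B a b : ℕ} (hB : 2 ≤ B) (h : a ≤ b) : B ^ a ≤ B ^ b :=
  Nat.pow_le_pow_right (by omega) h

/-- Data for the step merging two variable-variable equations with the same lhs. -/
theorem varvar_data (vs : List ((s : σ.Srt) × ℕ)) (hvs : vs.Nodup) (B : ℕ) (hB2 : 2 ≤ B)
    {s : σ.Srt} (x : ℕ) {m m' : ℕ} (hmm' : m ≠ m')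
    (hm : (⟨s, m⟩ : (s : σ.Srt) × ℕ) ∈ vs) (hm' : (⟨s, m'⟩ : (s : σ.Srt) × ℕ) ∈ vs) :
    ∃ new : List (EqT σ),
      mu1 vs B new < mu1 vs B [⟨s, x, .var s m⟩, ⟨s, x, .var s m'⟩] ∧
      (∀ e ∈ new, e ∈ ([⟨s, x, .var s m⟩, ⟨s, m', .var s m⟩,
          ⟨s, x, .var s m'⟩, ⟨s, m, .var s m'⟩] : List (EqT σ))) ∧
      ∀ ρ : σ.Val,
        (∀ e ∈ ([⟨s, x, .var s m⟩, ⟨s, x, .var s m'⟩] : List (EqT σ)), EqHolds ρ e) ↔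
        (∀ e ∈ new, EqHolds ρ e) := by
  rcases ltv_total hm hm' (sig_ne hmm') with hlt | hlt
  · refine ⟨[⟨s, x, .var s m⟩, ⟨s, m', .var s m⟩], ?_, by intro e he; simp at he ⊢; tauto, ?_⟩
    · simp only [mu1, List.map_cons, List.map_nil, List.sum_cons, List.sum_nil, ew_var]
      have := pow_lt_pow_B (B := B) hB2 hlt
      omega
    · intro ρ
      simp only [List.forall_mem_cons, List.forall_mem_nil, and_true, EqHolds, eval_var]
      constructor <;> rintro ⟨h1, h2⟩ <;> constructor <;> simp_all
  · refine ⟨[⟨s, x, .var s m'⟩, ⟨s, m, .var s m'⟩], ?_, by intro e he; simp at he ⊢; tauto, ?_⟩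
    · simp only [mu1, List.map_cons, List.map_nil, List.sum_cons, List.sum_nil, ew_var]
      have := pow_lt_pow_B (B := B) hB2 hlt
      omega
    · intro ρ
      simp only [List.forall_mem_cons, List.forall_mem_nil, and_true, EqHolds, eval_var]
      constructor <;> rintro ⟨h1, h2⟩ <;> constructor <;> simp_all

/-- Data for the step treating a variable equation and another equation with the same lhs. -/
theorem varapp_data (vs : List ((s : σ.Srt) × ℕ)) (hvs : vs.Nodup) (B : ℕ) (hB2 : 2 ≤ B)
    {s : σ.Srt} {x m : ℕ} {t' : σ.Tm s} (ht' : varIdxOf t' = none) (hmx : m ≠ x)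
    (hxv : (⟨s, x⟩ : (s : σ.Srt) × ℕ) ∈ vs) (hmv : (⟨s, m⟩ : (s : σ.Srt) × ℕ) ∈ vs) :
    ∃ new : List (EqT σ),
      mu1 vs B new < mu1 vs B [⟨s, x, .var s m⟩, ⟨s, x, t'⟩] ∧
      (∀ e ∈ new, e ∈ ([⟨s, x, .var s m⟩, ⟨s, m, t'⟩,
          ⟨s, m, .var s x⟩, ⟨s, x, t'⟩] : List (EqT σ))) ∧
      ∀ ρ : σ.Val,
        (∀ e ∈ ([⟨s, x, .var s m⟩, ⟨s, x, t'⟩] : List (EqT σ)), EqHolds ρ e) ↔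
        (∀ e ∈ new, EqHolds ρ e) := by
  rcases ltv_total hmv hxv (sig_ne hmx) with hlt | hlt
  · -- idx m < idx x : move the other equation to lhs m
    refine ⟨[⟨s, x, .var s m⟩, ⟨s, m, t'⟩], ?_, by intro e he; simp at he ⊢; tauto, ?_⟩
    · simp only [mu1, List.map_cons, List.map_nil, List.sum_cons, List.sum_nil, ew_var,
        ew_app vs B _ ht']
      have := pow_lt_pow_B (B := B) hB2
        (Nat.add_lt_add_left hlt (2 * vs.length + 2))
      omega
    · intro ρ
      simp only [List.forall_mem_cons, List.forall_mem_nil, and_true, EqHolds, eval_var]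
      constructor <;> rintro ⟨h1, h2⟩ <;> constructor <;> simp_all
  · -- idx x < idx m : reorient the variable equation
    refine ⟨[⟨s, m, .var s x⟩, ⟨s, x, t'⟩], ?_, by intro e he; simp at he ⊢; tauto, ?_⟩
    · simp only [mu1, List.map_cons, List.map_nil, List.sum_cons, List.sum_nil, ew_var,
        ew_app vs B _ ht']
      have := pow_lt_pow_B (B := B) hB2 hlt
      omega
    · intro ρ
      simp only [List.forall_mem_cons, List.forall_mem_nil, and_true, EqHolds, eval_var]
      constructor <;> rintro ⟨h1, h2⟩ <;> constructor <;> simp_all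

end Sig

namespace Sig

open Classical

variable {σ : Sig}

theorem cast_self {s : σ.Srt} (h : s = s) (t : σ.Tm s) : (h ▸ t : σ.Tm s) = t := rfl

/-- Data for the step merging two application equations with the same lhs. -/
theorem appapp_data (vs : List ((s : σ.Srt) × ℕ)) (B : ℕ) (hB2 : 2 ≤ B)
    {g g' : σ.Gen} {x : ℕ}
    {args : ∀ i : Fin (σ.src g).length, σ.Tm ((σ.src g).get i)}
    {args' : ∀ i : Fin (σ.src g').length, σ.Tm ((σ.src g').get i)}
    (h' : σ.tgt g' = σ.tgt g)
    (hfl : (Sig.Tm.app g args).IsFlat) (hfl' : (Sig.Tm.app g' args').IsFlat)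
    (har' : (σ.src g').length < B)
    (ρ₀ : σ.Val) (hs1 : EqHolds ρ₀ ⟨σ.tgt g, x, Sig.Tm.app g args⟩)
    (hs2 : EqHolds ρ₀ ⟨σ.tgt g, x, h' ▸ Sig.Tm.app g' args'⟩) :
    ∃ pair : List (EqT σ),
      mu1 vs B ((⟨σ.tgt g, x, Sig.Tm.app g args⟩ : EqT σ) :: pair) <
        mu1 vs B [⟨σ.tgt g, x, Sig.Tm.app g args⟩, ⟨σ.tgt g, x, h' ▸ Sig.Tm.app g' args'⟩] ∧
      (∀ e ∈ pair, (e.2.2).IsFlat ∧ tmAr e.2.2 = 0 ∧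
        elhs e ∈ (Sig.Tm.app g args).fv ∧ ∀ y ∈ (e.2.2).fv, y ∈ (Sig.Tm.app g' args').fv) ∧
      ∀ ρ : σ.Val,
        (∀ e ∈ ([⟨σ.tgt g, x, Sig.Tm.app g args⟩,
            ⟨σ.tgt g, x, h' ▸ Sig.Tm.app g' args'⟩] : List (EqT σ)), EqHolds ρ e) ↔
        (∀ e ∈ ((⟨σ.tgt g, x, Sig.Tm.app g args⟩ : EqT σ) :: pair), EqHolds ρ e) := by
  -- first, the two generators agree
  have hgg : g = g' := by
    apply build_gen_inj h'
    have e1 : ρ₀ (σ.tgt g) x = σ.build g (fun i => (args i).eval ρ₀) := hs1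
    have e2 : ρ₀ (σ.tgt g) x = Sig.Tm.eval ρ₀ (h' ▸ Sig.Tm.app g' args') := hs2
    rw [eval_cast h' (Sig.Tm.app g' args') ρ₀] at e2
    rw [← e1, e2]
    rfl
  subst hgg
  rw [cast_self h' (Sig.Tm.app g args')] at hs2 ⊢
  refine ⟨(List.finRange (σ.src g).length).map
      (fun i => (⟨(σ.src g).get i, argVar args hfl i,
        Sig.Tm.var ((σ.src g).get i) (argVar args' hfl' i)⟩ : EqT σ)), ?_, ?_, ?_⟩
  · -- measure decreases
    simp only [mu1, List.map_cons, List.sum_cons, List.map_nil, List.sum_nil, List.map_map]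
    have hsum : ((List.finRange (σ.src g).length).map
        (ew vs B ∘ fun i => (⟨(σ.src g).get i, argVar args hfl i,
          Sig.Tm.var ((σ.src g).get i) (argVar args' hfl' i)⟩ : EqT σ))).sum
        ≤ (σ.src g).length * B ^ vs.length := by
      have hb : ∀ y ∈ (List.finRange (σ.src g).length).map
          (ew vs B ∘ fun i => (⟨(σ.src g).get i, argVar args hfl i,
            Sig.Tm.var ((σ.src g).get i) (argVar args' hfl' i)⟩ : EqT σ)),
          y ≤ B ^ vs.length := by
        intro y hy
        simp only [List.mem_map, Function.comp] at hy
        obtain ⟨i, -, rfl⟩ := hy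
        rw [ew_var]
        exact pow_le_pow_B hB2 (idx_le_length _ _)
      have h2 := List.sum_le_card_nsmul _ _ hb
      simpa [smul_eq_mul] using h2
    have hlt2 : (σ.src g).length * B ^ vs.length
        < B ^ (2 * vs.length + 2 + Sig.idx vs (⟨σ.tgt g, x⟩ : (s : σ.Srt) × ℕ)) := by
      calc (σ.src g).length * B ^ vs.length < B * B ^ vs.length :=
            (Nat.mul_lt_mul_right (Nat.pow_pos (by omega))).2 har'
        _ = B ^ (vs.length + 1) := by ring
        _ ≤ _ := pow_le_pow_B hB2 (by omega)
    have hlt := lt_of_le_of_lt hsum hlt2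
    rw [show ew vs B (⟨σ.tgt g, x, Sig.Tm.app g args'⟩ : EqT σ)
      = B ^ (2 * vs.length + 2 + Sig.idx vs (⟨σ.tgt g, x⟩ : (s : σ.Srt) × ℕ))
      from ew_app vs B x (varIdxOf_app g args')]
    omega
  · -- properties of the new equations
    intro e he
    simp only [List.mem_map] at he
    obtain ⟨i, -, rfl⟩ := he
    refine ⟨trivial, rfl, ?_, ?_⟩
    · rw [mem_fv_app_flat args hfl]; exact ⟨i, rfl⟩
    · intro y hy
      simp only [fv_var, Set.mem_singleton_iff] at hy
      rw [mem_fv_app_flat args' hfl']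
      exact ⟨i, hy⟩
  · -- equivalence
    intro ρ
    constructor
    · intro h
      have h1 : EqHolds ρ ⟨σ.tgt g, x, Sig.Tm.app g args⟩ := h _ (by simp)
      have h2 : EqHolds ρ ⟨σ.tgt g, x, Sig.Tm.app g args'⟩ := h _ (by simp)
      intro e he
      rcases List.mem_cons.1 he with rfl | he
      · exact h1
      · simp only [List.mem_map] at he
        obtain ⟨i, -, rfl⟩ := he
        show ρ _ (argVar args hfl i) = _
        rw [eval_var]
        have hb : σ.build g (fun i => (args i).eval ρ)
            = σ.build g (fun i => (args' i).eval ρ) := by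
          have e1 : ρ (σ.tgt g) x = σ.build g (fun i => (args i).eval ρ) := h1
          have e2 : ρ (σ.tgt g) x = σ.build g (fun i => (args' i).eval ρ) := h2
          rw [← e1, e2]
        have hbi := build_args_inj hb i
        rwa [argVar_spec args hfl i, argVar_spec args' hfl' i, eval_var, eval_var] at hbi
    · intro h
      have h1 : EqHolds ρ ⟨σ.tgt g, x, Sig.Tm.app g args⟩ := h _ (List.mem_cons_self)
      have hargs : ∀ i, (args i).eval ρ = (args' i).eval ρ := by
        intro i
        have hi := h _ (List.mem_cons_of_mem _ (List.mem_map.2 ⟨i, List.mem_finRange i, rfl⟩))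
        have h3 : ρ ((σ.src g).get i) (argVar args hfl i)
            = ρ ((σ.src g).get i) (argVar args' hfl' i) := hi
        rw [argVar_spec args hfl i, argVar_spec args' hfl' i, eval_var, eval_var]
        exact h3
      intro e he
      rcases List.mem_cons.1 he with rfl | he
      · exact h1
      · rcases List.mem_cons.1 he with rfl | he
        · show ρ (σ.tgt g) x = (Sig.Tm.app g args').eval ρ
          have hre : (Sig.Tm.app g args').eval ρ = σ.build g (fun i => (args' i).eval ρ) := rfl
          rw [hre, ← funext hargs]
          exact h1
        · exact absurd he List.not_mem_nil

end Sig

namespace Sig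

open Classical

variable {σ : Sig}

theorem phase1 (vs : List ((s : σ.Srt) × ℕ)) (hvs : vs.Nodup) (B : ℕ) (hB2 : 2 ≤ B)
    (ρ₀ : σ.Val) :
    ∀ N (β : σ.Basic), mu1 vs B β.eqs ≤ N → β.WF → (∀ e ∈ β.eqs, tmAr e.2.2 < B) →
      (∀ x ∈ β.vars, x ∈ vs) → β.Sat ρ₀ →
      ∃ γ : σ.Basic, γ.fins = β.fins ∧ γ.WF ∧ (∀ e ∈ γ.eqs, tmAr e.2.2 < B) ∧
        (∀ x ∈ γ.vars, x ∈ vs) ∧ (∀ ρ : σ.Val, β.Sat ρ ↔ γ.Sat ρ) ∧ EqsSolved vs γ.eqs := by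
  intro N
  induction N using Nat.strong_induction_on with
  | _ N IH =>
  intro β hμ hWF hAr hvars hsat
  have inv : ∀ e ∈ β.eqs, (e.2.2).IsFlat ∧ tmAr e.2.2 < B ∧ elhs e ∈ vs ∧
      ∀ y ∈ (e.2.2).fv, y ∈ vs :=
    fun e he => ⟨hWF e he, hAr e he, hvars _ (mem_vars_lhs he),
      fun y hy => hvars _ (mem_vars_fv he hy)⟩
  have hfinv : ∀ u ∈ β.fins, u ∈ vs := fun u hu => hvars _ (mem_vars_fin hu)
  -- generic step
  have STEP : ∀ (old new rest : List (EqT σ)), β.eqs.Perm (old ++ rest) →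
      mu1 vs B new < mu1 vs B old →
      (∀ e ∈ new, (e.2.2).IsFlat ∧ tmAr e.2.2 < B ∧ elhs e ∈ vs ∧
        ∀ y ∈ (e.2.2).fv, y ∈ vs) →
      (∀ ρ : σ.Val, (∀ e ∈ old, EqHolds ρ e) ↔ (∀ e ∈ new, EqHolds ρ e)) →
      ∃ γ : σ.Basic, γ.fins = β.fins ∧ γ.WF ∧ (∀ e ∈ γ.eqs, tmAr e.2.2 < B) ∧
        (∀ x ∈ γ.vars, x ∈ vs) ∧ (∀ ρ : σ.Val, β.Sat ρ ↔ γ.Sat ρ) ∧ EqsSolved vs γ.eqs := by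
    intro old new rest hperm hlt hnew hequiv
    have hrest : ∀ e ∈ rest, e ∈ β.eqs :=
      fun e he => hperm.mem_iff.2 (List.mem_append_right _ he)
    set β' : σ.Basic := ⟨new ++ rest, β.fins⟩ with hβ'
    have hμ' : mu1 vs B β'.eqs < mu1 vs B β.eqs := by
      show mu1 vs B (new ++ rest) < _
      rw [mu1_perm vs B hperm, mu1_append, mu1_append]
      omega
    have hsatiff : ∀ ρ : σ.Val, β.Sat ρ ↔ β'.Sat ρ := by
      intro ρ
      rw [sat_def, sat_def]
      have key : (∀ e ∈ β.eqs, EqHolds ρ e) ↔ (∀ e ∈ new ++ rest, EqHolds ρ e) := by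
        rw [List.forall_mem_append, ← hequiv ρ, ← List.forall_mem_append]
        exact ⟨fun h e he => h e (hperm.mem_iff.2 he), fun h e he => h e (hperm.mem_iff.1 he)⟩
      rw [key]
    have hWF' : β'.WF := by
      intro e he
      rcases List.mem_append.1 he with h | h
      · exact (hnew e h).1
      · exact hWF e (hrest e h)
    have hAr' : ∀ e ∈ β'.eqs, tmAr e.2.2 < B := by
      intro e he
      rcases List.mem_append.1 he with h | h
      · exact (hnew e h).2.1
      · exact hAr e (hrest e h)
    have hvars' : ∀ x ∈ β'.vars, x ∈ vs := by
      apply vars_sub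
      · intro e he
        rcases List.mem_append.1 he with h | h
        · exact ⟨(hnew e h).2.2.1, (hnew e h).2.2.2⟩
        · exact ⟨(inv e (hrest e h)).2.2.1, (inv e (hrest e h)).2.2.2⟩
      · exact hfinv
    obtain ⟨γ, hg1, hg2, hg3, hg4, hg5, hg6⟩ :=
      IH (mu1 vs B β'.eqs) (lt_of_lt_of_le hμ' hμ) β' le_rfl hWF' hAr' hvars'
        ((hsatiff ρ₀).1 hsat)
    exact ⟨γ, hg1, hg2, hg3, hg4, fun ρ => (hsatiff ρ).trans (hg5 ρ), hg6⟩
  -- Case A : a duplicated equation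
  by_cases hA : ∃ e, List.Duplicate e β.eqs
  · obtain ⟨e, hdup⟩ := hA
    obtain ⟨l', hperm⟩ := perm_dup hdup
    refine STEP [e, e] [e] l' hperm ?_ ?_ ?_
    · simp only [mu1, List.map_cons, List.map_nil, List.sum_cons, List.sum_nil]
      have := ew_pos vs hB2 e
      omega
    · intro e' he'
      simp only [List.mem_singleton] at he'
      subst he'
      exact inv e' hdup.mem
    · intro ρ
      constructor
      · intro h e' he'
        have he2 : e' = e := by simpa using he'
        subst he2
        exact h _ (by simp)
      · intro h e' he'
        have he2 : e' = e := by simpa using he'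
        subst he2
        exact h _ (by simp)
  -- Case C : an equation x = x
  by_cases hC : ∃ e ∈ β.eqs, varIdxOf e.2.2 = some e.2.1
  · obtain ⟨e, he, hself⟩ := hC
    obtain ⟨s, x, t⟩ := e
    have ht : t = Sig.Tm.var s x := varIdxOf_eq_some hself
    subst ht
    obtain ⟨l', hperm⟩ := perm_single he
    refine STEP [⟨s, x, .var s x⟩] [] l' hperm ?_
      (fun e he => absurd he List.not_mem_nil) ?_
    · simp only [mu1, List.map_cons, List.map_nil, List.sum_cons, List.sum_nil]
      have := ew_pos vs hB2 (⟨s, x, .var s x⟩ : EqT σ)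
      omega
    · intro ρ
      constructor
      · intro _ e he
        exact absurd he List.not_mem_nil
      · intro _ e he
        simp only [List.mem_singleton] at he
        subst he
        rfl
  -- Case D : a wrongly oriented variable equation
  by_cases hD : ∃ e ∈ β.eqs, ∃ m, varIdxOf e.2.2 = some m ∧
      ¬ Sig.ltv vs (⟨e.1, m⟩ : (s : σ.Srt) × ℕ) (elhs e)
  · obtain ⟨e, he, m, hm, hnlt⟩ := hD
    obtain ⟨s, x, t⟩ := e
    have ht : t = Sig.Tm.var s m := varIdxOf_eq_some hm
    subst ht
    have hmx : m ≠ x := by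
      intro hh
      subst hh
      exact hC ⟨_, he, rfl⟩
    have hxv : (⟨s, x⟩ : (s : σ.Srt) × ℕ) ∈ vs := (inv _ he).2.2.1
    have hmv : (⟨s, m⟩ : (s : σ.Srt) × ℕ) ∈ vs := (inv _ he).2.2.2 _ (by simp)
    have hlt : Sig.ltv vs (⟨s, x⟩ : (s : σ.Srt) × ℕ) ⟨s, m⟩ :=
      (ltv_total hmv hxv (sig_ne hmx)).resolve_left hnlt
    obtain ⟨l', hperm⟩ := perm_single he
    refine STEP [⟨s, x, .var s m⟩] [⟨s, m, .var s x⟩] l' hperm ?_ ?_ ?_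
    · simp only [mu1, List.map_cons, List.map_nil, List.sum_cons, List.sum_nil, ew_var]
      have := pow_lt_pow_B (B := B) hB2 hlt
      omega
    · intro e' he'
      simp only [List.mem_singleton] at he'
      subst he'
      refine ⟨trivial, by show (0:ℕ) < B; omega, hmv, ?_⟩
      intro y hy
      simp only [fv_var, Set.mem_singleton_iff] at hy
      subst hy
      exact hxv
    · intro ρ
      constructor
      · intro h e' he'
        simp only [List.mem_singleton] at he'
        subst he'
        have h2 := h ⟨s, x, Sig.Tm.var s m⟩ (by simp)
        have h3 : ρ s x = ρ s m := h2
        exact h3.symm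
      · intro h e' he'
        simp only [List.mem_singleton] at he'
        subst he'
        have h2 := h ⟨s, m, Sig.Tm.var s x⟩ (by simp)
        have h3 : ρ s m = ρ s x := h2
        exact h3.symm
  -- Case B : two distinct equations with the same lhs
  by_cases hB : ∃ e₁ ∈ β.eqs, ∃ e₂ ∈ β.eqs, e₁ ≠ e₂ ∧ elhs e₁ = elhs e₂
  · obtain ⟨e₁, he₁, e₂, he₂, hne, helhs⟩ := hB
    obtain ⟨s, x, t⟩ := e₁
    obtain ⟨s₂, x₂, t'⟩ := e₂
    obtain ⟨rfl, hx⟩ := Sigma.mk.inj_iff.1 helhs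
    rw [heq_iff_eq] at hx
    subst hx
    have hnet : t ≠ t' := fun hh => hne (by rw [hh])
    have I1 := inv _ he₁
    have I2 := inv _ he₂
    rcases hvt : varIdxOf t with _ | m
    · -- first equation has an application rhs
      rcases hvt' : varIdxOf t' with _ | m'
      · -- app-app
        rcases tm_rep t with ⟨m, hteq⟩ | ⟨g, args, hg, hteq⟩
        · rw [hteq] at hvt; exact absurd hvt (by simp)
        subst hg
        have hteq2 : t = Sig.Tm.app g args := hteq
        subst hteq2
        rcases tm_rep t' with ⟨m', ht'eq⟩ | ⟨g', args', hg', ht'eq⟩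
        · rw [ht'eq] at hvt'; exact absurd hvt' (by simp)
        have hfl : (Sig.Tm.app g args).IsFlat := I1.1
        have hfl' : (Sig.Tm.app g' args').IsFlat := by
          have h0 := I1
          have h1 : (t' : σ.Tm (σ.tgt g)).IsFlat := I2.1
          rw [ht'eq, isFlat_cast] at h1
          exact h1
        have har' : (σ.src g').length < B := by
          have h1 : tmAr (t' : σ.Tm (σ.tgt g)) < B := I2.2.1
          rw [ht'eq, tmAr_cast, tmAr_app] at h1
          exact h1
        have hs1 : EqHolds ρ₀ ⟨σ.tgt g, x, Sig.Tm.app g args⟩ := hsat.1 _ he₁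
        have hs2 := hsat.1 _ he₂
        rw [ht'eq] at hs2
        obtain ⟨pair, hltm, hmem, hequiv⟩ :=
          appapp_data vs B hB2 hg' hfl hfl' har' ρ₀ hs1 hs2
        rw [← ht'eq] at hltm hequiv
        obtain ⟨l', hperm⟩ := perm_pair he₁ he₂ hne
        refine STEP [⟨σ.tgt g, x, Sig.Tm.app g args⟩, ⟨σ.tgt g, x, t'⟩]
          (⟨σ.tgt g, x, Sig.Tm.app g args⟩ :: pair) l' hperm hltm ?_ hequiv
        intro e he
        rcases List.mem_cons.1 he with rfl | he
        · exact I1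
        · obtain ⟨hf1, hf2, hf3, hf4⟩ := hmem e he
          refine ⟨hf1, by omega, I1.2.2.2 _ hf3, fun y hy => ?_⟩
          have hyy : y ∈ (t' : σ.Tm (σ.tgt g)).fv := by
            rw [ht'eq, fv_cast]; exact hf4 y hy
          exact I2.2.2.2 y hyy
      · -- app-var : use varapp_data with the equations swapped
        have ht'2 : t' = Sig.Tm.var s m' := varIdxOf_eq_some hvt'
        subst ht'2
        have hmx : m' ≠ x := by
          intro hh; subst hh
          exact hC ⟨_, he₂, rfl⟩
        have hxv : (⟨s, x⟩ : (s : σ.Srt) × ℕ) ∈ vs := I1.2.2.1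
        have hmv : (⟨s, m'⟩ : (s : σ.Srt) × ℕ) ∈ vs := I2.2.2.2 _ (by simp)
        obtain ⟨new, hltm, hmem, hequiv⟩ := varapp_data vs hvs B hB2 hvt hmx hxv hmv
        obtain ⟨l', hperm⟩ := perm_pair he₂ he₁ (Ne.symm hne)
        refine STEP [⟨s, x, .var s m'⟩, ⟨s, x, t⟩] new l' hperm hltm ?_ hequiv
        intro e he
        have hmm := hmem e he
        simp only [List.mem_cons, List.not_mem_nil, or_false] at hmm
        rcases hmm with rfl | rfl | rfl | rfl
        · exact I2
        · exact ⟨I1.1, I1.2.1, hmv, I1.2.2.2⟩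
        · refine ⟨trivial, by show (0:ℕ) < B; omega, hmv, fun y hy => ?_⟩
          simp only [fv_var, Set.mem_singleton_iff] at hy; subst hy; exact hxv
        · exact I1
    · -- first equation is a variable equation
      have ht2 : t = Sig.Tm.var s m := varIdxOf_eq_some hvt
      subst ht2
      rcases hvt' : varIdxOf t' with _ | m'
      · -- var-app
        have hmx : m ≠ x := by
          intro hh; subst hh
          exact hC ⟨_, he₁, rfl⟩
        have hxv : (⟨s, x⟩ : (s : σ.Srt) × ℕ) ∈ vs := I1.2.2.1
        have hmv : (⟨s, m⟩ : (s : σ.Srt) × ℕ) ∈ vs := I1.2.2.2 _ (by simp)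
        obtain ⟨new, hltm, hmem, hequiv⟩ := varapp_data vs hvs B hB2 hvt' hmx hxv hmv
        obtain ⟨l', hperm⟩ := perm_pair he₁ he₂ hne
        refine STEP [⟨s, x, .var s m⟩, ⟨s, x, t'⟩] new l' hperm hltm ?_ hequiv
        intro e he
        have hmm := hmem e he
        simp only [List.mem_cons, List.not_mem_nil, or_false] at hmm
        rcases hmm with rfl | rfl | rfl | rfl
        · exact I1
        · exact ⟨I2.1, I2.2.1, hmv, I2.2.2.2⟩
        · refine ⟨trivial, by show (0:ℕ) < B; omega, hmv, fun y hy => ?_⟩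
          simp only [fv_var, Set.mem_singleton_iff] at hy; subst hy; exact hxv
        · exact I2
      · -- var-var
        have ht'2 : t' = Sig.Tm.var s m' := varIdxOf_eq_some hvt'
        subst ht'2
        have hmm' : m ≠ m' := fun hh => hnet (by rw [hh])
        have hmv : (⟨s, m⟩ : (s : σ.Srt) × ℕ) ∈ vs := I1.2.2.2 _ (by simp)
        have hmv' : (⟨s, m'⟩ : (s : σ.Srt) × ℕ) ∈ vs := I2.2.2.2 _ (by simp)
        obtain ⟨new, hltm, hmem, hequiv⟩ := varvar_data vs hvs B hB2 x hmm' hmv hmv'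
        obtain ⟨l', hperm⟩ := perm_pair he₁ he₂ hne
        refine STEP [⟨s, x, .var s m⟩, ⟨s, x, .var s m'⟩] new l' hperm hltm ?_ hequiv
        intro e he
        have hmm := hmem e he
        simp only [List.mem_cons, List.not_mem_nil, or_false] at hmm
        rcases hmm with rfl | rfl | rfl | rfl
        · exact I1
        · refine ⟨trivial, by show (0:ℕ) < B; omega, hmv', fun y hy => ?_⟩
          simp only [fv_var, Set.mem_singleton_iff] at hy; subst hy; exact hmv
        · exact I2
        · refine ⟨trivial, by show (0:ℕ) < B; omega, hmv, fun y hy => ?_⟩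
          simp only [fv_var, Set.mem_singleton_iff] at hy; subst hy; exact hmv'
  -- no case applies : the equations are solved
  push_neg at hA hB hC hD
  refine ⟨β, rfl, hWF, hAr, hvars, fun ρ => Iff.rfl, ?_, ?_⟩
  · -- Nodup of lhs's
    by_contra hnd
    obtain ⟨a, hdup⟩ := List.exists_duplicate_iff_not_nodup.2 hnd
    have hsub : List.Sublist [a, a] (β.eqs.map elhs) := List.duplicate_iff_sublist.1 hdup
    obtain ⟨l'', hsub2, hmap⟩ := List.sublist_map_iff.1 hsub
    obtain ⟨e₁, l₃, rfl⟩ : ∃ e₁ l₃, l'' = e₁ :: l₃ := by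
      cases l'' with
      | nil => simp at hmap
      | cons a b => exact ⟨a, b, rfl⟩
    obtain ⟨e₂, l₄, rfl⟩ : ∃ e₂ l₄, l₃ = e₂ :: l₄ := by
      cases l₃ with
      | nil => simp at hmap
      | cons a b => exact ⟨a, b, rfl⟩
    simp only [List.map_cons, List.cons.injEq] at hmap
    obtain ⟨ha1, ha2, -⟩ := hmap
    have hm1 : e₁ ∈ β.eqs := hsub2.subset (by simp)
    have hm2 : e₂ ∈ β.eqs := hsub2.subset (by simp)
    by_cases heq : e₁ = e₂
    · subst heq
      refine hA e₁ (List.duplicate_iff_sublist.2 ?_)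
      exact (List.sublist_append_left [e₁, e₁] l₄).trans hsub2
    · exact hB e₁ hm1 e₂ hm2 heq (by rw [← ha1, ← ha2])
  · -- orientation
    intro e he m hm
    exact hD e he m (by rw [hm]; rfl)

end Sig

namespace Sig

open Classical

variable {σ : Sig}

theorem phase2 (vs : List ((s : σ.Srt) × ℕ)) (hvs : vs.Nodup) (B : ℕ) (hB2 : 2 ≤ B)
    (ρ₀ : σ.Val) (eqs : List (EqT σ))
    (hWFe : ∀ e ∈ eqs, (e.2.2).IsFlat) (hAr : ∀ e ∈ eqs, tmAr e.2.2 < B)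
    (hvarse : ∀ e ∈ eqs, elhs e ∈ vs ∧ ∀ y ∈ (e.2.2).fv, y ∈ vs)
    (hsolved : EqsSolved vs eqs) :
    ∀ N (fins : List ((s : σ.Srt) × ℕ)), mu2 vs B ρ₀ fins ≤ N → (∀ u ∈ fins, u ∈ vs) →
      (Sig.Basic.mk eqs fins).Sat ρ₀ →
      ∃ fins' : List ((s : σ.Srt) × ℕ),
        (∀ ρ : σ.Val, (Sig.Basic.mk eqs fins).Sat ρ ↔ (Sig.Basic.mk eqs fins').Sat ρ) ∧
        (∀ u ∈ fins', u ∈ vs) ∧ fins'.Nodup ∧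
        (∀ u ∈ fins', ∀ e ∈ eqs, elhs e ≠ u) ∧
        (∀ u ∈ fins', (∃ t : σ.Tree u.1, t.IsFinite) ∧ ∃ t : σ.Tree u.1, ¬ t.IsFinite) := by
  intro N
  induction N using Nat.strong_induction_on with
  | _ N IH =>
  intro fins hμ hfv hsat
  have STEP2 : ∀ (u : (s : σ.Srt) × ℕ) (newf rest : List ((s : σ.Srt) × ℕ)),
      fins.Perm (u :: rest) →
      mu2 vs B ρ₀ newf < fw vs B ρ₀ u →
      (∀ v ∈ newf, v ∈ vs) →
      (∀ ρ : σ.Val, (∀ e ∈ eqs, EqHolds ρ e) → (∀ v ∈ rest, (ρ v.1 v.2).IsFinite) →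
        ((ρ u.1 u.2).IsFinite ↔ ∀ v ∈ newf, (ρ v.1 v.2).IsFinite)) →
      ∃ fins' : List ((s : σ.Srt) × ℕ),
        (∀ ρ : σ.Val, (Sig.Basic.mk eqs fins).Sat ρ ↔ (Sig.Basic.mk eqs fins').Sat ρ) ∧
        (∀ u ∈ fins', u ∈ vs) ∧ fins'.Nodup ∧
        (∀ u ∈ fins', ∀ e ∈ eqs, elhs e ≠ u) ∧
        (∀ u ∈ fins', (∃ t : σ.Tree u.1, t.IsFinite) ∧ ∃ t : σ.Tree u.1, ¬ t.IsFinite) := by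
    intro u newf rest hperm hlt hnewv hequiv
    have hrest : ∀ v ∈ rest, v ∈ fins := fun v hv => hperm.mem_iff.2 (List.mem_cons_of_mem _ hv)
    have hμ' : mu2 vs B ρ₀ (newf ++ rest) < mu2 vs B ρ₀ fins := by
      rw [mu2_append, mu2_perm vs B ρ₀ hperm]
      show _ + _ < ((u :: rest).map (fw vs B ρ₀)).sum
      simp only [List.map_cons, List.sum_cons]
      have h0 : mu2 vs B ρ₀ rest = (rest.map (fw vs B ρ₀)).sum := rfl
      omega
    have hsatiff : ∀ ρ : σ.Val, (Sig.Basic.mk eqs fins).Sat ρ ↔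
        (Sig.Basic.mk eqs (newf ++ rest)).Sat ρ := by
      intro ρ
      rw [sat_def, sat_def]
      constructor
      · rintro ⟨h1, h2⟩
        have h2' : ∀ v ∈ u :: rest, (ρ v.1 v.2).IsFinite :=
          fun v hv => h2 v (hperm.mem_iff.2 hv)
        have hrest2 : ∀ v ∈ rest, (ρ v.1 v.2).IsFinite :=
          fun v hv => h2' v (List.mem_cons_of_mem _ hv)
        refine ⟨h1, fun v hv => ?_⟩
        rcases List.mem_append.1 hv with h | h
        · exact ((hequiv ρ h1 hrest2).1 (h2' u (List.mem_cons_self))) v h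
        · exact hrest2 v h
      · rintro ⟨h1, h2⟩
        have hnewf2 : ∀ v ∈ newf, (ρ v.1 v.2).IsFinite :=
          fun v hv => h2 v (List.mem_append_left _ hv)
        have hrest2 : ∀ v ∈ rest, (ρ v.1 v.2).IsFinite :=
          fun v hv => h2 v (List.mem_append_right _ hv)
        refine ⟨h1, fun v hv => ?_⟩
        have hv2 := hperm.mem_iff.1 hv
        rcases List.mem_cons.1 hv2 with rfl | h
        · exact (hequiv ρ h1 hrest2).2 hnewf2
        · exact hrest2 v h
    obtain ⟨fins', hf1, hf2, hf3, hf4, hf5⟩ :=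
      IH (mu2 vs B ρ₀ (newf ++ rest)) (lt_of_lt_of_le hμ' hμ) (newf ++ rest) le_rfl
        (fun v hv => (List.mem_append.1 hv).elim (hnewv v) (fun h => hfv v (hrest v h)))
        ((hsatiff ρ₀).1 hsat)
    exact ⟨fins', fun ρ => (hsatiff ρ).trans (hf1 ρ), hf2, hf3, hf4, hf5⟩
  -- Case A2 : duplicate fin constraint
  by_cases hA : ∃ v, List.Duplicate v fins
  · obtain ⟨v, hdup⟩ := hA
    obtain ⟨l', hperm⟩ := perm_dup hdup
    refine STEP2 v [] (v :: l') hperm ?_ (by intro v hv; simp at hv) ?_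
    · show 0 < fw vs B ρ₀ v
      have := fw_pos vs hB2 ρ₀ v
      omega
    · intro ρ _ hrest
      constructor
      · intro _ w hw
        exact absurd hw List.not_mem_nil
      · intro _
        exact hrest v (List.mem_cons_self)
  -- Case C2 : a fin constraint on a sort with no finite tree
  by_cases hC : ∃ u ∈ fins, ¬ ∃ t : σ.Tree u.1, t.IsFinite
  · obtain ⟨u, hu, hnf⟩ := hC
    exact absurd ⟨ρ₀ u.1 u.2, hsat.2 u hu⟩ hnf
  -- Case D2 : a fin constraint on a sort with no infinite tree
  by_cases hD : ∃ u ∈ fins, ¬ ∃ t : σ.Tree u.1, ¬ t.IsFinite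
  · obtain ⟨u, hu, hni⟩ := hD
    push_neg at hni
    obtain ⟨l', hperm⟩ := perm_single hu
    refine STEP2 u [] l' hperm ?_ (by intro v hv; simp at hv) ?_
    · show 0 < fw vs B ρ₀ u
      have := fw_pos vs hB2 ρ₀ u
      omega
    · intro ρ _ _
      constructor
      · intro _ w hw
        exact absurd hw List.not_mem_nil
      · intro _
        exact hni (ρ u.1 u.2)
  -- Case B2 : a fin constraint on an lhs variable
  by_cases hBc : ∃ u ∈ fins, ∃ e ∈ eqs, elhs e = u
  · obtain ⟨u, hu, e, he, helhs⟩ := hBc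
    obtain ⟨s, xx, t⟩ := e
    subst helhs
    obtain ⟨l', hperm⟩ := perm_single hu
    have hfin0 : (ρ₀ s xx).IsFinite := hsat.2 _ hu
    have hEq0 : EqHolds ρ₀ ⟨s, xx, t⟩ := hsat.1 _ he
    rcases hvt : varIdxOf t with _ | m
    · -- the equation is an application equation
      rcases tm_rep t with ⟨m, hteq⟩ | ⟨g, args, hg, hteq⟩
      · rw [hteq] at hvt; exact absurd hvt (by simp)
      subst hg
      have hteq2 : t = Sig.Tm.app g args := hteq
      subst hteq2
      have hfl : (Sig.Tm.app g args).IsFlat := hWFe _ he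
      -- value of xx under any solution of eqs
      have hval : ∀ ρ : σ.Val, EqHolds ρ ⟨σ.tgt g, xx, Sig.Tm.app g args⟩ →
          ρ (σ.tgt g) xx = σ.build g
            (fun i => ρ ((σ.src g).get i) (argVar args hfl i)) := by
        intro ρ hρ
        have h1 : ρ (σ.tgt g) xx = σ.build g (fun i => (args i).eval ρ) := hρ
        rw [h1]
        congr 1
        funext i
        rw [argVar_spec args hfl i, eval_var]
      set newf := (List.finRange (σ.src g).length).map
        (fun i => (⟨(σ.src g).get i, argVar args hfl i⟩ : (s : σ.Srt) × ℕ)) with hnewf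
      refine STEP2 ⟨σ.tgt g, xx⟩ newf l' hperm ?_ ?_ ?_
      · -- measure decreases
        have hval0 := hval ρ₀ hEq0
        have hfinb : (σ.build g
            (fun i => ρ₀ ((σ.src g).get i) (argVar args hfl i))).IsFinite := by
          rw [← hval0]; exact hfin0
        have hS : 1 ≤ tsize (ρ₀ (σ.tgt g) xx) := tsize_pos _ hfin0
        obtain ⟨S', hS'⟩ : ∃ S', tsize (ρ₀ (σ.tgt g) xx) = S' + 1 :=
          ⟨tsize (ρ₀ (σ.tgt g) xx) - 1, by omega⟩
        have hbound : ∀ y ∈ newf.map (fw vs B ρ₀),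
            y ≤ B ^ ((vs.length + 1) * S' + vs.length) := by
          intro y hy
          rw [hnewf, List.map_map] at hy
          simp only [List.mem_map, Function.comp] at hy
          obtain ⟨i, -, rfl⟩ := hy
          show B ^ ((vs.length + 1) * tsize (ρ₀ ((σ.src g).get i) (argVar args hfl i))
            + Sig.idx vs (⟨(σ.src g).get i, argVar args hfl i⟩ : (s : σ.Srt) × ℕ))
            ≤ B ^ ((vs.length + 1) * S' + vs.length)
          apply pow_le_pow_B hB2
          have hts : tsize (ρ₀ ((σ.src g).get i) (argVar args hfl i)) < S' + 1 := by
            rw [← hS']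
            have := tsize_lt g (fun i => ρ₀ ((σ.src g).get i) (argVar args hfl i)) hfinb i
            rw [← hval0] at this
            exact this
          have h1 : (vs.length + 1) * tsize (ρ₀ ((σ.src g).get i) (argVar args hfl i))
              ≤ (vs.length + 1) * S' := Nat.mul_le_mul_left _ (by omega)
          have h2 := idx_le_length vs (⟨(σ.src g).get i, argVar args hfl i⟩ : (s : σ.Srt) × ℕ)
          omega
        have hsum := List.sum_le_card_nsmul _ _ hbound
        have hlen : (newf.map (fw vs B ρ₀)).length = (σ.src g).length := by
          rw [hnewf]; simp
        rw [hlen, smul_eq_mul] at hsum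
        have hk : (σ.src g).length < B := by
          have := hAr _ he
          rwa [tmAr_app] at this
        have hmul : (σ.src g).length * B ^ ((vs.length + 1) * S' + vs.length)
            < B * B ^ ((vs.length + 1) * S' + vs.length) :=
          (Nat.mul_lt_mul_right (Nat.pow_pos (by omega))).2 hk
        have hpow : B * B ^ ((vs.length + 1) * S' + vs.length)
            = B ^ ((vs.length + 1) * S' + vs.length + 1) := by ring
        have hfinal : B ^ ((vs.length + 1) * S' + vs.length + 1)
            ≤ fw vs B ρ₀ (⟨σ.tgt g, xx⟩ : (s : σ.Srt) × ℕ) := by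
          show _ ≤ B ^ ((vs.length + 1) * tsize (ρ₀ (σ.tgt g) xx) + _)
          apply pow_le_pow_B hB2
          rw [hS']
          have : (vs.length + 1) * (S' + 1) = (vs.length + 1) * S' + vs.length + 1 := by ring
          omega
        show (newf.map (fw vs B ρ₀)).sum < _
        omega
      · -- new fin variables are in vs
        intro v hv
        rw [hnewf] at hv
        simp only [List.mem_map] at hv
        obtain ⟨i, -, rfl⟩ := hv
        refine (hvarse _ he).2 _ ?_
        rw [mem_fv_app_flat args hfl]
        exact ⟨i, rfl⟩
      · -- equivalence given the equations
        intro ρ hEq _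
        have hval1 := hval ρ (hEq _ he)
        show (ρ (σ.tgt g) xx).IsFinite ↔ _
        rw [hval1, build_isFinite_iff]
        constructor
        · intro h v hv
          rw [hnewf] at hv
          simp only [List.mem_map] at hv
          obtain ⟨i, -, rfl⟩ := hv
          exact h i
        · intro h i
          exact h _ (by rw [hnewf]; exact List.mem_map.2 ⟨i, List.mem_finRange i, rfl⟩)
    · -- the equation is a variable equation
      have ht2 : t = Sig.Tm.var s m := varIdxOf_eq_some hvt
      subst ht2
      have hordlt : Sig.ltv vs (⟨s, m⟩ : (s : σ.Srt) × ℕ) ⟨s, xx⟩ :=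
        hsolved.2 _ he m rfl
      have hvalvar : ρ₀ s xx = ρ₀ s m := hEq0
      refine STEP2 ⟨s, xx⟩ [⟨s, m⟩] l' hperm ?_ ?_ ?_
      · show fw vs B ρ₀ (⟨s, m⟩ : (s : σ.Srt) × ℕ) + 0 < _
        have h1 : fw vs B ρ₀ (⟨s, m⟩ : (s : σ.Srt) × ℕ)
            < fw vs B ρ₀ (⟨s, xx⟩ : (s : σ.Srt) × ℕ) := by
          show B ^ _ < B ^ _
          apply pow_lt_pow_B hB2
          show (vs.length + 1) * tsize (ρ₀ s m) + _ < (vs.length + 1) * tsize (ρ₀ s xx) + _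
          rw [hvalvar]
          have := hordlt
          unfold Sig.ltv at this
          omega
        omega
      · intro v hv
        simp only [List.mem_singleton] at hv
        subst hv
        exact (hvarse _ he).2 _ (by simp)
      · intro ρ hEq _
        have hv1 : ρ s xx = ρ s m := hEq _ he
        show (ρ s xx).IsFinite ↔ _
        rw [hv1]
        constructor
        · intro h v hv
          simp only [List.mem_singleton] at hv
          subst hv
          exact h
        · intro h
          exact h ⟨s, m⟩ (by simp)
  -- no case applies
  push_neg at hA hBc hC hD
  refine ⟨fins, fun ρ => Iff.rfl, hfv, ?_, ?_, ?_⟩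
  · by_contra hnd
    obtain ⟨a, hdup⟩ := List.exists_duplicate_iff_not_nodup.2 hnd
    exact hA a hdup
  · intro u hu e he
    exact hBc u hu e he
  · intro u hu
    exact ⟨hC u hu, hD u hu⟩

end Sig

namespace Sig

open Classical

variable {σ : Sig}

theorem solve_main (vs : List ((s : σ.Srt) × ℕ)) (α : σ.Basic)
    (hvs : vs.Nodup) (hWF : α.WF) (hvars : ∀ x ∈ α.vars, x ∈ vs) :
    (¬ ∃ ρ : σ.Val, α.Sat ρ) ∨
    (∃ β : σ.Basic, β.WF ∧ Sig.Solved vs β ∧ ∀ ρ : σ.Val, α.Sat ρ ↔ β.Sat ρ) := by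
  by_cases hsat : ∃ ρ : σ.Val, α.Sat ρ
  · right
    obtain ⟨ρ₀, hρ₀⟩ := hsat
    set B : ℕ := 2 + (α.eqs.map (fun e => tmAr e.2.2)).sum with hB
    have hB2 : 2 ≤ B := by omega
    have hAr : ∀ e ∈ α.eqs, tmAr e.2.2 < B := by
      intro e he
      have h1 : tmAr e.2.2 ≤ (α.eqs.map (fun e => tmAr e.2.2)).sum :=
        List.single_le_sum (fun _ _ => Nat.zero_le _) _ (List.mem_map.2 ⟨e, he, rfl⟩)
      omega
    obtain ⟨γ, hg1, hg2, hg3, hg4, hg5, hg6⟩ :=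
      phase1 vs hvs B hB2 ρ₀ (mu1 vs B α.eqs) α le_rfl hWF hAr hvars hρ₀
    have hγeta : Sig.Basic.mk γ.eqs α.fins = γ := by rw [← hg1]
    have hvarse : ∀ e ∈ γ.eqs, elhs e ∈ vs ∧ ∀ y ∈ (e.2.2).fv, y ∈ vs :=
      fun e he => ⟨hg4 _ (mem_vars_lhs he), fun y hy => hg4 _ (mem_vars_fv he hy)⟩
    have hfv : ∀ u ∈ α.fins, u ∈ vs := fun u hu => hvars _ (mem_vars_fin hu)
    have hsatγ : (Sig.Basic.mk γ.eqs α.fins).Sat ρ₀ := by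
      rw [hγeta]
      exact (hg5 ρ₀).1 hρ₀
    obtain ⟨fins', hf1, hf2, hf3, hf4, hf5⟩ :=
      phase2 vs hvs B hB2 ρ₀ γ.eqs hg2 hg3 hvarse hg6
        (mu2 vs B ρ₀ α.fins) α.fins le_rfl hfv hsatγ
    refine ⟨Sig.Basic.mk γ.eqs fins', ?_, ⟨?_, ?_, ?_⟩, ?_⟩
    · exact fun e he => hg2 e he
    · -- Nodup of lhs's and fins
      refine List.nodup_append.2 ⟨hg6.1, hf3, ?_⟩
      intro a ha b hb hab
      simp only [List.mem_map] at ha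
      obtain ⟨e, he, rfl⟩ := ha
      exact hf4 _ hb e he hab
    · -- orientation
      exact hg6.2
    · -- fins sorts have finite and infinite trees
      exact hf5
    · -- equivalence
      intro ρ
      rw [hg5 ρ, ← hγeta]
      exact hf1 ρ
  · exact Or.inl hsat

end Sig

theorem solveBasic_correct' (σ : Sig) :
    (∀ (vs : List ((s : σ.Srt) × ℕ)) (α : σ.Basic),
      vs.Nodup → α.WF → (∀ x ∈ α.vars, x ∈ vs) →
      (¬ ∃ ρ : σ.Val, α.Sat ρ) ∨
      (∃ β : σ.Basic, β.WF ∧ Sig.Solved vs β ∧ ∀ ρ : σ.Val, α.Sat ρ ↔ β.Sat ρ)) ∧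
    (Finite σ.Srt → Finite σ.Gen →
      ∃ F : List ((s : σ.Srt) × ℕ) → σ.Basic → Option σ.Basic,
        ∀ (vs : List ((s : σ.Srt) × ℕ)) (α : σ.Basic),
          vs.Nodup → α.WF → (∀ x ∈ α.vars, x ∈ vs) →
            ((F vs α = none ↔ ¬ ∃ ρ : σ.Val, α.Sat ρ) ∧
             ∀ β : σ.Basic, F vs α = some β →
               β.WF ∧ Sig.Solved vs β ∧ ∀ ρ : σ.Val, α.Sat ρ ↔ β.Sat ρ)) := by
  constructor
  · intro vs α h1 h2 h3
    exact Sig.solve_main vs α h1 h2 h3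
  · intro _ _
    classical
    refine ⟨fun vs α =>
      if hs : (∃ ρ : σ.Val, α.Sat ρ) ∧ ∃ β : σ.Basic, β.WF ∧ Sig.Solved vs β ∧
          ∀ ρ : σ.Val, α.Sat ρ ↔ β.Sat ρ
      then some hs.2.choose else none, ?_⟩
    intro vs α hnd hwf hv
    constructor
    · constructor
      · intro hF hsat
        have hβ := (Sig.solve_main vs α hnd hwf hv).resolve_left (not_not_intro hsat)
        have hF' : (if hs : (∃ ρ : σ.Val, α.Sat ρ) ∧ ∃ β : σ.Basic, β.WF ∧ Sig.Solved vs β ∧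
            ∀ ρ : σ.Val, α.Sat ρ ↔ β.Sat ρ
            then some hs.2.choose else none) = none := hF
        rw [dif_pos ⟨hsat, hβ⟩] at hF'
        exact nomatch hF'
      · intro hunsat
        exact dif_neg (fun hc => hunsat hc.1)
    · intro β hF
      have hF' : (if hs : (∃ ρ : σ.Val, α.Sat ρ) ∧ ∃ β : σ.Basic, β.WF ∧ Sig.Solved vs β ∧
          ∀ ρ : σ.Val, α.Sat ρ ↔ β.Sat ρ
          then some hs.2.choose else none) = some β := hF
      by_cases hcond : (∃ ρ : σ.Val, α.Sat ρ) ∧ ∃ β : σ.Basic, β.WF ∧ Sig.Solved vs β ∧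
          ∀ ρ : σ.Val, α.Sat ρ ↔ β.Sat ρ
      · rw [dif_pos hcond] at hF'
        have heq : hcond.2.choose = β := Option.some.inj hF'
        subst heq
        exact hcond.2.choose_spec
      · rw [dif_neg hcond] at hF'
        exact nomatch hF'


/-- solving basic formulae. For every total ordering
`v₀ < ⋯ < vₙ` of variables (given as a duplicate-free list `vs`) and every basic
formula `α` whose variables are among `vs`, either `α` is unsatisfiable in the
structure `𝒯` of trees, or there is a basic formula that is solved with respect
to this ordering and equivalent to `α` in the extended theory of trees.
Moreover, when the signature is finite, such a solved formula (or the answer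
"unsatisfiable", represented by `none`) can be computed by a function of `α`. -/
theorem solveBasic_correct (σ : Sig) :
    (∀ (vs : List ((s : σ.Srt) × ℕ)) (α : σ.Basic),
      vs.Nodup → α.WF → (∀ x ∈ α.vars, x ∈ vs) →
      (¬ ∃ ρ : σ.Val, α.Sat ρ) ∨
      (∃ β : σ.Basic, β.WF ∧ Sig.Solved vs β ∧ ∀ ρ : σ.Val, α.Sat ρ ↔ β.Sat ρ)) ∧
    (Finite σ.Srt → Finite σ.Gen →
      ∃ F : List ((s : σ.Srt) × ℕ) → σ.Basic → Option σ.Basic,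
        ∀ (vs : List ((s : σ.Srt) × ℕ)) (α : σ.Basic),
          vs.Nodup → α.WF → (∀ x ∈ α.vars, x ∈ vs) →
            ((F vs α = none ↔ ¬ ∃ ρ : σ.Val, α.Sat ρ) ∧
             ∀ β : σ.Basic, F vs α = some β →
               β.WF ∧ Sig.Solved vs β ∧ ∀ ρ : σ.Val, α.Sat ρ ↔ β.Sat ρ)) := by
  exact solveBasic_correct' σ
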